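/- For the Painlevé II equation (P = 2y³ + xy + a, Q = R = S = 0, A = 12y, B = 0, N = 4, Ω = 0, φ₁ = 0, φ₂ = -3/(5y), y ≠ 0), the field γ defined by γ¹ = -6BN(BP + A_x)/(5A²) + 18NBQ/(5A) + 6N(B_x + A_y)/(5A) - N_y - (12/5)NR - 2ΩB and γ² = -6N(BP + A_x)/(5A) + N_x + (6/5)NQ + 2ΩA satisfies γ¹ = 24/(5y) and γ² = 0, hence ξ = -2Ωα - γ has components ξ¹ = -24/(5y), ξ² = 0; the pseudoinvariant M = -A·ξ¹ - B·ξ² equals 288/5, and the invariant I₁ = M/N² equals 18/5. -/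

import Mathlib

noncomputable def pdx (f : ℝ → ℝ → ℝ) (x y : ℝ) : ℝ := deriv (fun t => f t y) x
noncomputable def pdy (f : ℝ → ℝ → ℝ) (x y : ℝ) : ℝ := deriv (fun t => f x t) y

/-- for Painlevé II, γ = (24/(5y), 0), ξ = (-24/(5y), 0),
M = -Aξ¹ - Bξ² = 288/5 and I₁ = M/N² = 18/5. -/
theorem stmt10 (a : ℝ) (P Q R S A B N Ω γ₁ γ₂ ξ₁ ξ₂ M : ℝ → ℝ → ℝ)
    (hP : ∀ x y, P x y = 2 * y ^ 3 + x * y + a) (hQ : ∀ x y, Q x y = 0)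
    (hR : ∀ x y, R x y = 0) (hS : ∀ x y, S x y = 0)
    (hA : ∀ x y, A x y = 12 * y) (hB : ∀ x y, B x y = 0)
    (hN : ∀ x y, N x y = 4) (hΩ : ∀ x y, Ω x y = 0)
    (hγ₁ : ∀ x y, γ₁ x y = -6 * B x y * N x y * (B x y * P x y + pdx A x y) / (5 * (A x y) ^ 2)
      + 18 * N x y * B x y * Q x y / (5 * A x y)
      + 6 * N x y * (pdx B x y + pdy A x y) / (5 * A x y)
      - pdy N x y - (12 / 5) * N x y * R x y - 2 * Ω x y * B x y)
    (hγ₂ : ∀ x y, γ₂ x y = -6 * N x y * (B x y * P x y + pdx A x y) / (5 * A x y)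
      + pdx N x y + (6 / 5) * N x y * Q x y + 2 * Ω x y * A x y)
    (hξ₁ : ∀ x y, ξ₁ x y = -2 * Ω x y * B x y - γ₁ x y)
    (hξ₂ : ∀ x y, ξ₂ x y = -2 * Ω x y * (-A x y) - γ₂ x y)
    (hM : ∀ x y, M x y = -A x y * ξ₁ x y - B x y * ξ₂ x y) :
    ∀ x y : ℝ, y ≠ 0 →
      γ₁ x y = 24 / (5 * y) ∧ γ₂ x y = 0 ∧ ξ₁ x y = -24 / (5 * y) ∧ ξ₂ x y = 0 ∧
      M x y = 288 / 5 ∧ M x y / (N x y) ^ 2 = 18 / 5 := by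
  intro x y hy
  have hAx : pdx A x y = 0 := by
    have : (fun t => A t y) = fun _ => 12 * y := funext fun t => hA t y
    simp [pdx, this]
  have hAy : pdy A x y = 12 := by
    have h : (fun t => A x t) = fun t => 12 * t := funext fun t => hA x t
    rw [pdy, h]
    simpa using ((hasDerivAt_id y).const_mul (12:ℝ)).deriv
  have hBx : pdx B x y = 0 := by
    have : (fun t => B t y) = fun _ => (0:ℝ) := funext fun t => hB t y
    simp [pdx, this]
  have hNx : pdx N x y = 0 := by
    have : (fun t => N t y) = fun _ => (4:ℝ) := funext fun t => hN t y
    simp [pdx, this]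
  have hNy : pdy N x y = 0 := by
    have : (fun t => N x t) = fun _ => (4:ℝ) := funext fun t => hN x t
    simp [pdy, this]
  have hg1 : γ₁ x y = 24 / (5 * y) := by
    rw [hγ₁, hAx, hAy, hBx, hNy, hA, hB, hN, hΩ, hQ, hR]
    field_simp
    ring
  have hg2 : γ₂ x y = 0 := by
    rw [hγ₂, hAx, hNx, hA, hB, hN, hΩ, hQ]
    field_simp
    ring
  have hx1 : ξ₁ x y = -24 / (5 * y) := by
    rw [hξ₁, hg1, hΩ, hB]; ring
  have hx2 : ξ₂ x y = 0 := by
    rw [hξ₂, hg2, hΩ]; ring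
  have hMv : M x y = 288 / 5 := by
    rw [hM, hx1, hx2, hA, hB]
    field_simp
    ring
  exact ⟨hg1, hg2, hx1, hx2, hMv, by rw [hMv, hN]; norm_num⟩
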